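/- (Schwartz–Zippel with multiplicities) Let F be a field, f ∈ F[x_1, ..., x_n] a nonzero polynomial of degree at most d, and U ⊆ F a finite set. Then ∑_{a ∈ U^n} mult(f, a) ≤ d · |U|^{n−1}. -/

import Mathlib

open MvPolynomial

/-- The shift of `f` by `a`: the polynomial `z ↦ f(z + a)`. Its coefficients are
exactly the Hasse derivatives of `f` evaluated at `a`. -/
noncomputable def polyShift {F : Type*} [CommRing F] {n : ℕ}
    (f : MvPolynomial (Fin n) F) (a : Fin n → F) : MvPolynomial (Fin n) F :=
  MvPolynomial.bind₁ (fun i => MvPolynomial.X i + MvPolynomial.C (a i)) f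

/-- The multiplicity of `f` at `a`: the largest `m` such that every Hasse derivative of
`f` of weight less than `m` vanishes at `a`. -/
noncomputable def polyMult {F : Type*} [CommRing F] {n : ℕ}
    (f : MvPolynomial (Fin n) F) (a : Fin n → F) : ℕ :=
  sSup {m : ℕ | ∀ d : Fin n →₀ ℕ, (d.sum fun _ e => e) < m →
    MvPolynomial.coeff d (polyShift f a) = 0}

namespace SZHelp

open Polynomial

variable {F : Type*} [CommRing F] {n : ℕ}

theorem polyShift_polyShift (f : MvPolynomial (Fin n) F) (a b : Fin n → F) :
    polyShift (polyShift f a) b = polyShift f (a + b) := by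
  have hfun : (fun i => (MvPolynomial.bind₁ fun j => MvPolynomial.X j + MvPolynomial.C (b j))
      (MvPolynomial.X i + MvPolynomial.C (a i))) =
      fun i => MvPolynomial.X i + MvPolynomial.C ((a + b) i) := by
    funext i
    simp only [map_add, bind₁_X_right, bind₁_C_right, Pi.add_apply, MvPolynomial.C_add]
    ring
  simp only [polyShift, bind₁_bind₁, hfun]

theorem polyShift_zero (f : MvPolynomial (Fin n) F) :
    polyShift f 0 = f := by
  simp only [polyShift, Pi.zero_apply, map_zero, add_zero]
  rw [bind₁_X_left]
  rfl

theorem polyShift_injective (a : Fin n → F) :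
    Function.Injective fun f : MvPolynomial (Fin n) F => polyShift f a := by
  intro f g h
  have h2 : polyShift (polyShift f a) (-a) = polyShift (polyShift g a) (-a) := by
    simp only at h; rw [h]
  rwa [polyShift_polyShift, polyShift_polyShift, add_neg_cancel, polyShift_zero,
    polyShift_zero] at h2

theorem polyShift_ne_zero {f : MvPolynomial (Fin n) F} (hf : f ≠ 0) (a : Fin n → F) :
    polyShift f a ≠ 0 := by
  intro h0
  have h1 : polyShift (0 : MvPolynomial (Fin n) F) a = 0 := map_zero _
  exact hf (polyShift_injective a (h0.trans h1.symm))

theorem polyMult_le (f : MvPolynomial (Fin n) F) (a : Fin n → F) (d : Fin n →₀ ℕ)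
    (h : MvPolynomial.coeff d (polyShift f a) ≠ 0) :
    polyMult f a ≤ d.sum fun _ e => e := by
  apply csSup_le ⟨0, by intro e he; exact absurd he (Nat.not_lt_zero _)⟩
  intro m hm
  by_contra hlt
  exact h (hm d (by omega))

theorem polyMult_bddAbove {f : MvPolynomial (Fin n) F} (hf : f ≠ 0) (a : Fin n → F) :
    BddAbove {m : ℕ | ∀ d : Fin n →₀ ℕ, (d.sum fun _ e => e) < m →
      MvPolynomial.coeff d (polyShift f a) = 0} := by
  obtain ⟨d0, hd0⟩ := MvPolynomial.ne_zero_iff.1 (polyShift_ne_zero hf a)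
  refine ⟨d0.sum fun _ e => e, fun m hm => ?_⟩
  by_contra hlt
  exact hd0 (hm d0 (by omega))

theorem coeff_eq_zero_of_lt_polyMult {f : MvPolynomial (Fin n) F} (hf : f ≠ 0) (a : Fin n → F)
    {d : Fin n →₀ ℕ} (h : (d.sum fun _ e => e) < polyMult f a) :
    MvPolynomial.coeff d (polyShift f a) = 0 := by
  have hmem := Nat.sSup_mem ⟨0, by intro e he; exact absurd he (Nat.not_lt_zero _)⟩
    (polyMult_bddAbove hf a)
  exact hmem d h

theorem exists_coeff_polyMult {f : MvPolynomial (Fin n) F} (hf : f ≠ 0) (a : Fin n → F) :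
    ∃ d : Fin n →₀ ℕ, (d.sum fun _ e => e) = polyMult f a ∧
      MvPolynomial.coeff d (polyShift f a) ≠ 0 := by
  have hnotin : polyMult f a + 1 ∉ {m : ℕ | ∀ d : Fin n →₀ ℕ, (d.sum fun _ e => e) < m →
      MvPolynomial.coeff d (polyShift f a) = 0} := by
    intro hmem
    have := le_csSup (polyMult_bddAbove hf a) hmem
    have h2 : polyMult f a + 1 ≤ polyMult f a := this
    omega
  simp only [Set.mem_setOf_eq, not_forall] at hnotin
  obtain ⟨d, hlt, hne⟩ := hnotin
  exact ⟨d, le_antisymm (by omega) (polyMult_le f a d hne), hne⟩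

theorem polyMult_eq_zero_of_fin0 (f : MvPolynomial (Fin 0) F) (hf : f ≠ 0) (a : Fin 0 → F) :
    polyMult f a = 0 := by
  obtain ⟨d, hd, _⟩ := exists_coeff_polyMult hf a
  rw [← hd]
  have hd0 : d = 0 := Finsupp.ext fun i => i.elim0
  rw [hd0, Finsupp.sum_zero_index]

/-- The ring hom version of `polyShift · a`. -/
noncomputable def shiftHom (a : Fin n → F) :
    MvPolynomial (Fin n) F →+* MvPolynomial (Fin n) F :=
  (MvPolynomial.bind₁ fun i => MvPolynomial.X i + MvPolynomial.C (a i)).toRingHom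

theorem shiftHom_apply (a : Fin n → F) (g : MvPolynomial (Fin n) F) :
    shiftHom a g = polyShift g a := rfl

theorem shiftHom_injective (a : Fin n → F) : Function.Injective (shiftHom a) :=
  polyShift_injective a

/-- Coefficient-wise application of `MvPolynomial.coeff i` to a polynomial with
`MvPolynomial` coefficients. -/
noncomputable def lam (i : Fin n →₀ ℕ) (Q : Polynomial (MvPolynomial (Fin n) F)) :
    Polynomial F :=
  ⟨⟨Q.toFinsupp.coeff.mapRange (MvPolynomial.coeff i) rfl⟩⟩

theorem lam_coeff (i : Fin n →₀ ℕ) (Q : Polynomial (MvPolynomial (Fin n) F)) (k : ℕ) :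
    (lam i Q).coeff k = MvPolynomial.coeff i (Q.coeff k) := by
  rcases Q with ⟨Qf⟩
  simp [lam, Polynomial.coeff, Finsupp.mapRange_apply]
  exact Finsupp.mapRange_apply

theorem lam_add (i : Fin n →₀ ℕ) (P Q : Polynomial (MvPolynomial (Fin n) F)) :
    lam i (P + Q) = lam i P + lam i Q := by
  ext k
  simp [lam_coeff, MvPolynomial.coeff_add]

theorem lam_C (i : Fin n →₀ ℕ) (c : MvPolynomial (Fin n) F) :
    lam i (Polynomial.C c) = Polynomial.C (MvPolynomial.coeff i c) := by
  ext k
  simp only [lam_coeff, Polynomial.coeff_C]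
  split <;> simp

theorem lam_mul_X (i : Fin n →₀ ℕ) (P : Polynomial (MvPolynomial (Fin n) F)) :
    lam i (P * Polynomial.X) = lam i P * Polynomial.X := by
  ext k
  cases k with
  | zero => simp [lam_coeff, Polynomial.mul_coeff_zero]
  | succ k => simp [lam_coeff, Polynomial.coeff_mul_X]

theorem lam_mul_CC (i : Fin n →₀ ℕ) (P : Polynomial (MvPolynomial (Fin n) F)) (x : F) :
    lam i (P * Polynomial.C (MvPolynomial.C x)) = lam i P * Polynomial.C x := by
  ext k
  rw [lam_coeff, Polynomial.coeff_mul_C, Polynomial.coeff_mul_C, lam_coeff,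
    mul_comm (P.coeff k) (MvPolynomial.C x), MvPolynomial.coeff_C_mul, mul_comm]

theorem lam_taylor (i : Fin n →₀ ℕ) (b : F) (Q : Polynomial (MvPolynomial (Fin n) F)) :
    lam i (Polynomial.taylor (MvPolynomial.C b) Q) = Polynomial.taylor b (lam i Q) := by
  induction Q using Polynomial.induction_on with
  | C c => rw [Polynomial.taylor_C, lam_C, Polynomial.taylor_C]
  | add p q hp hq => rw [map_add, lam_add, hp, hq, lam_add, map_add]
  | monomial m c ih =>
    have hXsucc : (Polynomial.C c * Polynomial.X ^ (m + 1) :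
        Polynomial (MvPolynomial (Fin n) F)) = Polynomial.C c * Polynomial.X ^ m *
        Polynomial.X := by ring
    rw [hXsucc, Polynomial.taylor_mul, Polynomial.taylor_X, mul_add, lam_add, lam_mul_X,
      lam_mul_CC, ih, lam_mul_X, Polynomial.taylor_mul, Polynomial.taylor_X, mul_add]

theorem finSuccEquiv_polyShift (f : MvPolynomial (Fin (n + 1)) F) (b : F) (a : Fin n → F) :
    finSuccEquiv F n (polyShift f (Fin.cons b a)) =
      Polynomial.taylor (MvPolynomial.C b) (((finSuccEquiv F n) f).map (shiftHom a)) := by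
  induction f using MvPolynomial.induction_on with
  | C c =>
    have h1 : polyShift (MvPolynomial.C c) (Fin.cons b a) = MvPolynomial.C c :=
      bind₁_C_right _ _
    have h2 : finSuccEquiv F n (MvPolynomial.C c) = Polynomial.C (MvPolynomial.C c) := by
      simp [finSuccEquiv_apply]
    rw [h1, h2, Polynomial.map_C, Polynomial.taylor_C]
    have h3 : shiftHom a (MvPolynomial.C c) = MvPolynomial.C c := bind₁_C_right _ _
    rw [h3]
  | add p q hp hq =>
    have h1 : polyShift (p + q) (Fin.cons b a)
        = polyShift p (Fin.cons b a) + polyShift q (Fin.cons b a) := map_add _ _ _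
    rw [h1, map_add, hp, hq, map_add, Polynomial.map_add, map_add]
  | mul_X p j hp =>
    have h1 : polyShift (p * MvPolynomial.X j) (Fin.cons b a)
        = polyShift p (Fin.cons b a) * ((MvPolynomial.X j
          + MvPolynomial.C ((Fin.cons b a : Fin (n + 1) → F) j)) : MvPolynomial (Fin (n + 1)) F) := by
      rw [polyShift, map_mul, bind₁_X_right]; rfl
    rw [h1, map_mul, hp, map_mul, Polynomial.map_mul, Polynomial.taylor_mul]
    congr 1
    induction j using Fin.cases with
    | zero =>
      have hC : finSuccEquiv F n (MvPolynomial.C b) = Polynomial.C (MvPolynomial.C b) := by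
        simp [finSuccEquiv_apply]
      rw [map_add, finSuccEquiv_X_zero, Fin.cons_zero, hC, Polynomial.map_X,
        Polynomial.taylor_X]
    | succ k =>
      have h2 : shiftHom a (MvPolynomial.X k) = MvPolynomial.X k + MvPolynomial.C (a k) :=
        bind₁_X_right _ _
      have h3 : finSuccEquiv F n (MvPolynomial.C (a k)) = Polynomial.C (MvPolynomial.C (a k)) := by
        simp [finSuccEquiv_apply]
      rw [map_add, finSuccEquiv_X_succ, Fin.cons_succ, h3, Polynomial.map_C, h2,
        Polynomial.taylor_C, ← Polynomial.C_add]

theorem sum_piFinset_succ {M : Type*} [AddCommMonoid M] (U : Finset F)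
    (g : (Fin (n + 1) → F) → M) :
    ∑ x ∈ Fintype.piFinset (fun _ : Fin (n + 1) => U), g x =
      ∑ b ∈ U, ∑ a ∈ Fintype.piFinset (fun _ : Fin n => U), g (Fin.cons b a) := by
  rw [← Finset.sum_product']
  apply Finset.sum_nbij' (i := fun x => (x 0, Fin.tail x)) (j := fun p => Fin.cons p.1 p.2)
  · intro x hx
    rw [Finset.mem_product]
    refine ⟨Fintype.mem_piFinset.1 hx 0, Fintype.mem_piFinset.2 fun i => ?_⟩
    exact Fintype.mem_piFinset.1 hx i.succ
  · intro p hp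
    rw [Finset.mem_product] at hp
    refine Fintype.mem_piFinset.2 fun i => ?_
    induction i using Fin.cases with
    | zero => rw [Fin.cons_zero]; exact hp.1
    | succ k => rw [Fin.cons_succ]; exact Fintype.mem_piFinset.1 hp.2 k
  · intro x _
    exact Fin.cons_self_tail x
  · intro p _
    simp [Fin.tail_cons]
  · intro x _
    rw [Fin.cons_self_tail]

theorem sum_rootMultiplicity_le {F : Type*} [Field F] {q : Polynomial F} (hq : q ≠ 0)
    (U : Finset F) : ∑ b ∈ U, q.rootMultiplicity b ≤ q.natDegree := by
  classical
  calc ∑ b ∈ U, q.rootMultiplicity b = ∑ b ∈ U, q.roots.count b := by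
        simp_rw [Polynomial.count_roots]
    _ = ∑ b ∈ U ∩ q.roots.toFinset, q.roots.count b := by
        refine (Finset.sum_subset Finset.inter_subset_left fun x hxU hx => ?_).symm
        have hnot : x ∉ q.roots.toFinset := fun hmem => hx (Finset.mem_inter.2 ⟨hxU, hmem⟩)
        exact Multiset.count_eq_zero_of_notMem fun hm => hnot (Multiset.mem_toFinset.2 hm)
    _ ≤ ∑ b ∈ q.roots.toFinset, q.roots.count b :=
        Finset.sum_le_sum_of_subset Finset.inter_subset_right
    _ = Multiset.card q.roots := Multiset.toFinset_sum_count_eq _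
    _ ≤ q.natDegree := q.card_roots'

theorem sz_aux {F : Type*} [Field F] : ∀ (n : ℕ) (f : MvPolynomial (Fin n) F), f ≠ 0 →
    ∀ d : ℕ, f.totalDegree ≤ d → ∀ U : Finset F,
    ∑ a ∈ Fintype.piFinset (fun _ : Fin n => U), polyMult f a ≤ d * U.card ^ (n - 1) := by
  intro n
  induction n with
  | zero =>
    intro f hf d _ U
    have hz : ∀ a ∈ Fintype.piFinset (fun _ : Fin 0 => U), polyMult f a = 0 :=
      fun a _ => polyMult_eq_zero_of_fin0 f hf a
    rw [Finset.sum_congr rfl hz]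
    simp
  | succ n ih =>
    intro f hf d hd U
    classical
    set P := finSuccEquiv F n f with hPdef
    have hP : P ≠ 0 := by
      intro h
      apply hf
      have := congrArg (finSuccEquiv F n).symm h
      rwa [AlgEquiv.symm_apply_apply, map_zero] at this
    set t := P.natDegree with htdef
    set ft := P.leadingCoeff with hftdef
    have hft : ft ≠ 0 := Polynomial.leadingCoeff_ne_zero.2 hP
    have hcoefft : P.coeff t = ft := rfl
    have hftd : ft.totalDegree ≤ d - t := by
      have h1 := totalDegree_coeff_finSuccEquiv_add_le f t (by rw [← hPdef, hcoefft]; exact hft)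
      rw [← hPdef, hcoefft] at h1
      omega
    have ht : t ≤ d := by
      have h1 : t = degreeOf 0 f := by rw [htdef, hPdef, natDegree_finSuccEquiv]
      have h2 := degreeOf_le_totalDegree f 0
      omega
    have claim : ∀ a : Fin n → F,
        ∑ b ∈ U, polyMult f (Fin.cons b a) ≤ U.card * polyMult ft a + t := by
      intro a
      set Q := P.map (shiftHom a) with hQdef
      have hQ : Q ≠ 0 := by
        intro h
        exact hP (Polynomial.map_injective _ (shiftHom_injective a)
          (by rw [← hQdef, h, Polynomial.map_zero]))
      have hQt : Q.natDegree = t := Polynomial.natDegree_map_eq_of_injective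
        (shiftHom_injective a) P
      have hQlc : Q.leadingCoeff = shiftHom a ft := Polynomial.leadingCoeff_map_of_injective
        (shiftHom_injective a) P
      obtain ⟨i, hiwt, hine⟩ := exists_coeff_polyMult hft a
      set q := lam i Q with hqdef
      have hqt : q.coeff t = MvPolynomial.coeff i (polyShift ft a) := by
        rw [hqdef, lam_coeff, ← hQt]
        show MvPolynomial.coeff i Q.leadingCoeff = _
        rw [hQlc, shiftHom_apply]
      have hq : q ≠ 0 := fun h => hine (by rw [← hqt, h, Polynomial.coeff_zero])
      have hqdeg : q.natDegree ≤ t := by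
        rw [Polynomial.natDegree_le_iff_coeff_eq_zero]
        intro N hN
        rw [hqdef, lam_coeff, Polynomial.coeff_eq_zero_of_natDegree_lt (by omega),
          MvPolynomial.coeff_zero]
      have hb : ∀ b : F, polyMult f (Fin.cons b a) ≤ polyMult ft a + q.rootMultiplicity b := by
        intro b
        have hT : finSuccEquiv F n (polyShift f (Fin.cons b a)) =
            Polynomial.taylor (MvPolynomial.C b) Q := by
          rw [finSuccEquiv_polyShift f b a, hQdef, hPdef]
        have htayne : Polynomial.taylor b q ≠ 0 := by
          intro h
          apply hq
          have h2 := congrArg (Polynomial.taylor (-b)) h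
          rwa [Polynomial.taylor_taylor, neg_add_cancel, Polynomial.taylor_zero, map_zero] at h2
        set r := (Polynomial.taylor b q).natTrailingDegree with hrdef
        have hrne : (Polynomial.taylor b q).coeff r ≠ 0 :=
          Polynomial.trailingCoeff_nonzero_iff_nonzero.2 htayne
        have hkey : MvPolynomial.coeff (i.cons r) (polyShift f (Fin.cons b a)) ≠ 0 := by
          rw [← finSuccEquiv_coeff_coeff, hT, ← lam_coeff, lam_taylor]
          exact hrne
        have hle := polyMult_le f (Fin.cons b a) (i.cons r) hkey
        rw [Finsupp.sum_cons, hiwt] at hle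
        have hrm : r = q.rootMultiplicity b := by
          rw [Polynomial.rootMultiplicity_eq_natTrailingDegree, hrdef, Polynomial.taylor_apply]
        omega
      calc ∑ b ∈ U, polyMult f (Fin.cons b a)
          ≤ ∑ b ∈ U, (polyMult ft a + q.rootMultiplicity b) :=
            Finset.sum_le_sum fun b _ => hb b
        _ = U.card * polyMult ft a + ∑ b ∈ U, q.rootMultiplicity b := by
            rw [Finset.sum_add_distrib, Finset.sum_const, smul_eq_mul]
        _ ≤ U.card * polyMult ft a + t :=
            Nat.add_le_add_left (le_trans (sum_rootMultiplicity_le hq U) hqdeg) _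
    have hcard : (Fintype.piFinset (fun _ : Fin n => U)).card = U.card ^ n := by
      rw [Fintype.card_piFinset]
      simp
    have main : ∑ x ∈ Fintype.piFinset (fun _ : Fin (n + 1) => U), polyMult f x ≤
        U.card * (∑ a ∈ Fintype.piFinset (fun _ : Fin n => U), polyMult ft a)
          + t * U.card ^ n := by
      rw [sum_piFinset_succ U (polyMult f), Finset.sum_comm]
      calc ∑ a ∈ Fintype.piFinset (fun _ : Fin n => U), ∑ b ∈ U, polyMult f (Fin.cons b a)
          ≤ ∑ a ∈ Fintype.piFinset (fun _ : Fin n => U), (U.card * polyMult ft a + t) :=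
            Finset.sum_le_sum fun a _ => claim a
        _ = U.card * (∑ a ∈ Fintype.piFinset (fun _ : Fin n => U), polyMult ft a)
            + t * U.card ^ n := by
            rw [Finset.sum_add_distrib, Finset.sum_const, smul_eq_mul, Finset.mul_sum, hcard]
            ring_nf
    cases n with
    | zero =>
      have hz : ∑ a ∈ Fintype.piFinset (fun _ : Fin 0 => U), polyMult ft a = 0 :=
        Finset.sum_eq_zero fun a _ => polyMult_eq_zero_of_fin0 ft hft a
      rw [hz] at main
      simp only [Nat.mul_zero, Nat.zero_add, pow_zero, Nat.mul_one] at main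
      simpa using le_trans main ht
    | succ k =>
      have hIH := ih ft hft (d - t) hftd U
      have hstep : U.card * (∑ a ∈ Fintype.piFinset (fun _ : Fin (k + 1) => U), polyMult ft a)
          ≤ (d - t) * U.card ^ (k + 1) := by
        calc U.card * (∑ a ∈ Fintype.piFinset (fun _ : Fin (k + 1) => U), polyMult ft a)
            ≤ U.card * ((d - t) * U.card ^ (k + 1 - 1)) := Nat.mul_le_mul_left _ hIH
          _ = (d - t) * U.card ^ (k + 1) := by rw [Nat.add_sub_cancel]; ring
      have hfinal : ∑ x ∈ Fintype.piFinset (fun _ : Fin (k + 2) => U), polyMult f x ≤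
          (d - t) * U.card ^ (k + 1) + t * U.card ^ (k + 1) :=
        le_trans main (Nat.add_le_add_right hstep _)
      have heq : (d - t) * U.card ^ (k + 1) + t * U.card ^ (k + 1) = d * U.card ^ (k + 1) := by
        rw [← Nat.add_mul]
        congr 1
        omega
      rw [heq] at hfinal
      simpa using hfinal

end SZHelp

/-- Schwartz–Zippel with multiplicities: for a nonzero polynomial `f`
of degree at most `d` and a finite set `U ⊆ F`,
`∑_{a ∈ U^n} mult(f, a) ≤ d · |U|^{n-1}`. -/
theorem schwartz_zippel_with_multiplicities
    {F : Type*} [Field F] {n : ℕ} (f : MvPolynomial (Fin n) F) (hf : f ≠ 0)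
    (d : ℕ) (hd : f.totalDegree ≤ d) (U : Finset F) :
    ∑ a ∈ Fintype.piFinset (fun _ : Fin n => U), polyMult f a ≤ d * U.card ^ (n - 1) :=
  SZHelp.sz_aux n f hf d hd U
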